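/- As formal power series in z and y (with q = zy), one has the identity 1/(1-y-z) = 1/((1-2P(q))(1 - z/(1-P(q)))) + P(q)/(z(1-2P(q))(1 - P(q)/z)), obtained by partial fraction decomposition of -z/((z-P(q))(z-(1-P(q)))), where P(q)=(1-√(1-4q))/2 satisfies P(1-P)=q. Moreover the first summand S⁺(z,y) contains exactly the monomials C(m1+m2,m1) z^{m1} y^{m2} with m1 ≥ m2 ≥ 0. -/

import Mathlib

/-- The shifted Catalan generating function
`P(q) = Σ_{n≥1} (1/n) C(2n-2, n-1) q^n`, satisfying `P(1-P) = q`. -/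
noncomputable def catalanShifted : PowerSeries ℚ :=
  PowerSeries.mk fun n => if n = 0 then 0 else (Nat.choose (2 * n - 2) (n - 1) : ℚ) / n

/-- The bivariate power series `P(z·y)`, variable `0` for `z`, variable `1` for `y`. -/
noncomputable def Pzy : MvPowerSeries (Fin 2) ℚ :=
  fun d => if d 0 = d 1 then PowerSeries.coeff (d 0) catalanShifted else 0

/-- The bivariate power series `P(z·y)/z` (a genuine power series, since the
coefficients of `P(z·y)` are supported on the diagonal). -/
noncomputable def Pzy_div_z : MvPowerSeries (Fin 2) ℚ :=
  fun d => if d 0 + 1 = d 1 then PowerSeries.coeff (d 1) catalanShifted else 0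

/-- `S⁺(z,y) = 1/((1-2P(zy))(1 - z/(1-P(zy))))`. -/
noncomputable def Splus : MvPowerSeries (Fin 2) ℚ :=
  ((1 - 2 * Pzy) * (1 - MvPowerSeries.X 0 * (1 - Pzy)⁻¹))⁻¹

/-- `S⁻(z,y) = P(zy)/(z(1-2P(zy))(1 - P(zy)/z))`. -/
noncomputable def Sminus : MvPowerSeries (Fin 2) ℚ :=
  Pzy_div_z * (1 - 2 * Pzy)⁻¹ * (1 - Pzy_div_z)⁻¹

/-- The bivariate power series `1/(1-y-z) = Σ_{i,j≥0} C(i+j,i) z^i y^j`. -/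
noncomputable def invOneSubYZ : MvPowerSeries (Fin 2) ℚ :=
  fun d => (Nat.choose (d 0 + d 1) (d 0) : ℚ)

namespace Stmt8Aux

open MvPowerSeries Finsupp

/-- Catalan generating function. -/
noncomputable def catC : PowerSeries ℚ := PowerSeries.mk fun n => (catalan n : ℚ)

lemma coeff_catalanShifted_succ (m : ℕ) :
    PowerSeries.coeff (m + 1) catalanShifted = (catalan m : ℚ) := by
  rw [catalanShifted, PowerSeries.coeff_mk, if_neg (Nat.succ_ne_zero m)]
  have h2 : Nat.choose (2 * (m + 1) - 2) (m + 1 - 1) = (m + 1) * catalan m := by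
    rw [succ_mul_catalan_eq_centralBinom, Nat.centralBinom]
    congr 1 <;> omega
  rw [h2]
  push_cast
  field_simp

lemma catalanShifted_eq : catalanShifted = PowerSeries.X * catC := by
  ext n
  cases n with
  | zero => simp [catalanShifted, catC]
  | succ m =>
    rw [coeff_catalanShifted_succ, mul_comm, PowerSeries.coeff_succ_mul_X,
      catC, PowerSeries.coeff_mk]

lemma catC_sq_X : catC * catC * PowerSeries.X = catC - 1 := by
  ext n
  cases n with
  | zero => simp [catC]
  | succ m =>
    rw [PowerSeries.coeff_succ_mul_X, map_sub, PowerSeries.coeff_mul]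
    simp only [catC, PowerSeries.coeff_mk, PowerSeries.coeff_one,
      Nat.succ_ne_zero, if_false, sub_zero]
    rw [catalan_succ' m]
    push_cast
    rfl


/-- Diagonal exponent. -/
noncomputable def diag2 (n : ℕ) : Fin 2 →₀ ℕ := Finsupp.single 0 n + Finsupp.single 1 n

@[simp] lemma diag2_apply0 (n : ℕ) : diag2 n 0 = n := by
  simp [diag2, Finsupp.single_apply]

@[simp] lemma diag2_apply1 (n : ℕ) : diag2 n 1 = n := by
  simp [diag2, Finsupp.single_apply]

lemma fin2_ext (f : Fin 2 →₀ ℕ) : f = Finsupp.single 0 (f 0) + Finsupp.single 1 (f 1) := by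
  ext a
  fin_cases a <;> simp [Finsupp.single_apply]

lemma fin2_eq_iff {f g : Fin 2 →₀ ℕ} : f = g ↔ f 0 = g 0 ∧ f 1 = g 1 := by
  constructor
  · rintro rfl; exact ⟨rfl, rfl⟩
  · rintro ⟨h0, h1⟩
    rw [fin2_ext f, fin2_ext g, h0, h1]

lemma diag2_inj : Function.Injective diag2 := by
  intro a b h
  have := congrArg (fun f => f 0) h
  simpa using this

lemma diag2_add (a b : ℕ) : diag2 a + diag2 b = diag2 (a + b) := by
  rw [fin2_eq_iff]
  simp

/-- The diagonal embedding `F(q) ↦ F(z·y)`. -/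
noncomputable def Dg (F : PowerSeries ℚ) : MvPowerSeries (Fin 2) ℚ :=
  fun d => if d 0 = d 1 then PowerSeries.coeff (d 0) F else 0

lemma coeff_Dg (F : PowerSeries ℚ) (d : Fin 2 →₀ ℕ) :
    MvPowerSeries.coeff d (Dg F) = if d 0 = d 1 then PowerSeries.coeff (d 0) F else 0 := rfl

lemma Dg_mul (F G : PowerSeries ℚ) : Dg F * Dg G = Dg (F * G) := by
  ext d
  rw [MvPowerSeries.coeff_mul, coeff_Dg]
  by_cases hd : d 0 = d 1
  · rw [if_pos hd, PowerSeries.coeff_mul]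
    have hdd : d = diag2 (d 0) := by rw [fin2_eq_iff]; simp [hd]
    rw [hdd]
    simp only [coeff_Dg, diag2_apply0]
    set emb : ℕ × ℕ ↪ (Fin 2 →₀ ℕ) × (Fin 2 →₀ ℕ) :=
      ⟨fun p => (diag2 p.1, diag2 p.2), by
        refine id ?_
        intro p q h
        have h1 := congrArg Prod.fst h
        have h2 := congrArg Prod.snd h
        exact Prod.ext (diag2_inj h1) (diag2_inj h2)⟩ with hemb
    have hsub : (Finset.HasAntidiagonal.antidiagonal (d 0)).map emb ⊆ Finset.HasAntidiagonal.antidiagonal (diag2 (d 0)) := by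
      intro x hx
      rw [Finset.mem_map] at hx
      obtain ⟨p, hp, rfl⟩ := hx
      rw [Finset.HasAntidiagonal.mem_antidiagonal] at hp ⊢
      rw [hemb]
      simpa [diag2_add, Function.Embedding.coeFn_mk] using congrArg diag2 hp
    have hvan : ∀ x ∈ Finset.HasAntidiagonal.antidiagonal (diag2 (d 0)),
        x ∉ (Finset.HasAntidiagonal.antidiagonal (d 0)).map emb →
        ((if x.1 0 = x.1 1 then PowerSeries.coeff (x.1 0) F else 0) *
          if x.2 0 = x.2 1 then PowerSeries.coeff (x.2 0) G else 0) = 0 := by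
      intro x hx hnx
      rw [Finset.HasAntidiagonal.mem_antidiagonal] at hx
      by_cases h1 : x.1 0 = x.1 1
      · by_cases h2 : x.2 0 = x.2 1
        · exfalso
          apply hnx
          rw [Finset.mem_map]
          refine ⟨(x.1 0, x.2 0), ?_, ?_⟩
          · rw [Finset.HasAntidiagonal.mem_antidiagonal]
            have := congrArg (fun f => f 0) hx
            simpa using this
          · rw [hemb]
            have e1 : diag2 (x.1 0) = x.1 := by rw [fin2_eq_iff]; simp [h1]
            have e2 : diag2 (x.2 0) = x.2 := by rw [fin2_eq_iff]; simp [h2]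
            simp [Function.Embedding.coeFn_mk, e1, e2]
        · rw [if_neg h2, mul_zero]
      · rw [if_neg h1, zero_mul]
    rw [← Finset.sum_subset hsub hvan, Finset.sum_map]
    apply Finset.sum_congr rfl
    intro p _
    simp [hemb, Function.Embedding.coeFn_mk]
  · rw [if_neg hd]
    apply Finset.sum_eq_zero
    intro x hx
    rw [Finset.HasAntidiagonal.mem_antidiagonal] at hx
    rw [coeff_Dg, coeff_Dg]
    by_cases h1 : x.1 0 = x.1 1
    · by_cases h2 : x.2 0 = x.2 1
      · exfalso
        apply hd
        have h0 := congrArg (fun f => f 0) hx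
        have h1' := congrArg (fun f => f 1) hx
        simp only [Finsupp.add_apply] at h0 h1'
        omega
      · rw [if_neg h2, mul_zero]
    · rw [if_neg h1, zero_mul]


lemma fin2_zero_iff (d : Fin 2 →₀ ℕ) : d = 0 ↔ d 0 = 0 ∧ d 1 = 0 := by
  rw [fin2_eq_iff]; simp

lemma Dg_one : Dg 1 = 1 := by
  ext d
  rw [coeff_Dg, MvPowerSeries.coeff_one]
  by_cases hd : d 0 = d 1
  · rw [if_pos hd, PowerSeries.coeff_one]
    by_cases h0 : d 0 = 0
    · rw [if_pos h0, if_pos ((fin2_zero_iff d).2 ⟨h0, hd ▸ h0⟩)]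
    · rw [if_neg h0, if_neg (fun h => h0 (((fin2_zero_iff d).1 h).1))]
  · rw [if_neg hd, if_neg (fun h => hd (by rw [((fin2_zero_iff d).1 h).1, ((fin2_zero_iff d).1 h).2]))]

lemma Dg_sub (F G : PowerSeries ℚ) : Dg (F - G) = Dg F - Dg G := by
  ext d
  rw [map_sub, coeff_Dg, coeff_Dg, coeff_Dg]
  split_ifs
  · rw [map_sub]
  · simp

lemma Dg_X : Dg PowerSeries.X = MvPowerSeries.X 0 * MvPowerSeries.X 1 := by
  have : (MvPowerSeries.X 0 * MvPowerSeries.X 1 : MvPowerSeries (Fin 2) ℚ)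
      = MvPowerSeries.monomial (diag2 1) 1 := by
    rw [MvPowerSeries.X_def, MvPowerSeries.X_def, MvPowerSeries.monomial_mul_monomial,
      mul_one]
    rfl
  rw [this]
  ext d
  rw [coeff_Dg, MvPowerSeries.coeff_monomial]
  by_cases hd : d 0 = d 1
  · rw [if_pos hd, PowerSeries.coeff_X]
    by_cases h0 : d 0 = 1
    · rw [if_pos h0, if_pos (by rw [fin2_eq_iff]; simp [h0, hd ▸ h0])]
    · rw [if_neg h0, if_neg (fun h => h0 (by rw [h]; simp))]
  · rw [if_neg hd, if_neg (fun h => hd (by rw [h]; simp))]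


lemma Pzy_eq : Pzy = Dg catalanShifted := rfl

lemma u_eq : Pzy_div_z = MvPowerSeries.X 1 * Dg catC := by
  ext d
  have hL : MvPowerSeries.coeff d Pzy_div_z
      = (if d 0 + 1 = d 1 then PowerSeries.coeff (d 1) catalanShifted else 0) := rfl
  rw [hL, MvPowerSeries.X_def, MvPowerSeries.coeff_monomial_mul]
  by_cases hle : Finsupp.single (1 : Fin 2) 1 ≤ d
  · rw [if_pos hle, one_mul, coeff_Dg]
    have h1 : 1 ≤ d 1 := by rwa [Finsupp.single_le_iff] at hle
    have hs0 : (d - Finsupp.single (1 : Fin 2) 1 : Fin 2 →₀ ℕ) 0 = d 0 := by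
      rw [Finsupp.tsub_apply]; simp [Finsupp.single_apply]
    have hs1 : (d - Finsupp.single (1 : Fin 2) 1 : Fin 2 →₀ ℕ) 1 = d 1 - 1 := by
      rw [Finsupp.tsub_apply]; simp
    rw [hs0, hs1]
    by_cases hd : d 0 + 1 = d 1
    · rw [if_pos hd, if_pos (by omega), ← hd, coeff_catalanShifted_succ, catC,
        PowerSeries.coeff_mk]
    · rw [if_neg hd, if_neg (by omega)]
  · rw [if_neg hle]
    have h1 : d 1 = 0 := by
      by_contra h
      exact hle (Finsupp.single_le_iff.mpr (by omega))
    rw [if_neg (by omega)]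

lemma p_eq : Pzy = MvPowerSeries.X 0 * MvPowerSeries.X 1 * Dg catC := by
  rw [Pzy_eq, catalanShifted_eq, ← Dg_mul, Dg_X]

lemma hx0u : MvPowerSeries.X 0 * Pzy_div_z = Pzy := by
  rw [u_eq, p_eq, mul_assoc]

lemma hub : Pzy_div_z * (1 - Pzy) = MvPowerSeries.X 1 := by
  have key : Dg catC * (1 - Pzy) = 1 := by
    rw [Pzy_eq, mul_sub, mul_one, Dg_mul, ← Dg_sub, catalanShifted_eq]
    rw [show catC - catC * (PowerSeries.X * catC) = 1 from by
      linear_combination -catC_sq_X]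
    exact Dg_one
  rw [u_eq, mul_assoc, key, mul_one]


lemma cc_Pzy : MvPowerSeries.constantCoeff Pzy = 0 := by
  rw [← MvPowerSeries.coeff_zero_eq_constantCoeff_apply]
  have : MvPowerSeries.coeff (0 : Fin 2 →₀ ℕ) Pzy
      = if (0 : Fin 2 →₀ ℕ) 0 = (0 : Fin 2 →₀ ℕ) 1 then
          PowerSeries.coeff ((0 : Fin 2 →₀ ℕ) 0) catalanShifted else 0 := rfl
  rw [this]
  simp [catalanShifted]

lemma cc_u : MvPowerSeries.constantCoeff Pzy_div_z = 0 := by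
  rw [← MvPowerSeries.coeff_zero_eq_constantCoeff_apply]
  have : MvPowerSeries.coeff (0 : Fin 2 →₀ ℕ) Pzy_div_z
      = if (0 : Fin 2 →₀ ℕ) 0 + 1 = (0 : Fin 2 →₀ ℕ) 1 then
          PowerSeries.coeff ((0 : Fin 2 →₀ ℕ) 1) catalanShifted else 0 := rfl
  rw [this]
  simp

lemma hA0 : MvPowerSeries.constantCoeff (1 - 2 * Pzy) ≠ 0 := by
  simp [map_sub, map_mul, cc_Pzy]

lemma hB0 : MvPowerSeries.constantCoeff (1 - Pzy) ≠ 0 := by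
  simp [map_sub, cc_Pzy]

lemma hE0 : MvPowerSeries.constantCoeff (1 - Pzy - MvPowerSeries.X 0) ≠ 0 := by
  simp [map_sub, cc_Pzy, MvPowerSeries.constantCoeff_X]

lemma hF0 : MvPowerSeries.constantCoeff (1 - Pzy_div_z) ≠ 0 := by
  simp [map_sub, cc_u]

lemma hAE0 : MvPowerSeries.constantCoeff
    ((1 - 2 * Pzy) * (1 - Pzy - MvPowerSeries.X 0)) ≠ 0 := by
  rw [map_mul]
  exact mul_ne_zero hA0 hE0

lemma Splus_eq :
    Splus = (1 - Pzy) * ((1 - 2 * Pzy) * (1 - Pzy - MvPowerSeries.X 0))⁻¹ := by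
  rw [Splus, MvPowerSeries.inv_eq_iff_mul_eq_one (by
    rw [map_mul]
    apply mul_ne_zero (by simp [map_sub, map_mul, cc_Pzy])
    simp [map_sub, map_mul, cc_Pzy, MvPowerSeries.constantCoeff_X])]
  have hBB := MvPowerSeries.mul_inv_cancel (1 - Pzy) hB0
  have hAE := MvPowerSeries.mul_inv_cancel ((1 - 2 * Pzy) * (1 - Pzy - MvPowerSeries.X 0)) hAE0
  linear_combination (-(((1 - 2 * Pzy) * (1 - Pzy - MvPowerSeries.X 0))⁻¹ * (1 - 2 * Pzy)
    * MvPowerSeries.X 0)) * hBB + hAE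

lemma sum_mul :
    (Splus + Sminus) * (1 - MvPowerSeries.X 0 - MvPowerSeries.X 1) = 1 := by
  have hEF : (1 - Pzy - MvPowerSeries.X 0) * (1 - Pzy_div_z)
      = 1 - MvPowerSeries.X 0 - MvPowerSeries.X 1 := by
    linear_combination hx0u - hub
  have hBFuE : (1 - Pzy) * (1 - Pzy_div_z) + Pzy_div_z * (1 - Pzy - MvPowerSeries.X 0)
      = 1 - 2 * Pzy := by
    linear_combination -hx0u
  have hAE := MvPowerSeries.mul_inv_cancel ((1 - 2 * Pzy) * (1 - Pzy - MvPowerSeries.X 0)) hAE0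
  have hA := MvPowerSeries.mul_inv_cancel (1 - 2 * Pzy) hA0
  have hF := MvPowerSeries.mul_inv_cancel (1 - Pzy_div_z) hF0
  rw [Splus_eq, Sminus, ← hEF]
  linear_combination
    ((1 - Pzy) * (1 - Pzy_div_z) * (1 - 2 * Pzy)⁻¹) * hAE
    + (1 - (1 - Pzy) * (1 - Pzy_div_z) * (1 - Pzy - MvPowerSeries.X 0)
        * ((1 - 2 * Pzy) * (1 - Pzy - MvPowerSeries.X 0))⁻¹) * hA
    + (Pzy_div_z * (1 - Pzy - MvPowerSeries.X 0) * (1 - 2 * Pzy)⁻¹) * hF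
    + (1 - 2 * Pzy)⁻¹ * hBFuE


lemma coeff_invOneSubYZ (d : Fin 2 →₀ ℕ) :
    MvPowerSeries.coeff d invOneSubYZ = (Nat.choose (d 0 + d 1) (d 0) : ℚ) := rfl

lemma coeff_mul_Xs (f : MvPowerSeries (Fin 2) ℚ) (s : Fin 2) (d : Fin 2 →₀ ℕ) :
    MvPowerSeries.coeff d (f * MvPowerSeries.X s)
      = if 1 ≤ d s then MvPowerSeries.coeff (d - Finsupp.single s 1) f else 0 := by
  rw [MvPowerSeries.X_def, MvPowerSeries.coeff_mul_monomial]
  by_cases h : Finsupp.single s 1 ≤ d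
  · rw [if_pos h, if_pos (Finsupp.single_le_iff.mp h), mul_one]
  · rw [if_neg h, if_neg (fun hc => h (Finsupp.single_le_iff.mpr hc))]

lemma pascalQ (a b : ℕ) :
    (Nat.choose (a + b) a : ℚ) - (if 1 ≤ a then (Nat.choose (a - 1 + b) (a - 1) : ℚ) else 0)
      - (if 1 ≤ b then (Nat.choose (a + (b - 1)) a : ℚ) else 0)
    = if a = 0 ∧ b = 0 then 1 else 0 := by
  rcases a with _ | a <;> rcases b with _ | b
  · norm_num
  · norm_num
  · norm_num
  · rw [if_pos (by omega), if_pos (by omega), if_neg (by omega)]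
    have key : Nat.choose (a + 1 + (b + 1)) (a + 1)
        = Nat.choose (a + (b + 1)) a + Nat.choose (a + (b + 1)) (a + 1) := by
      rw [show a + 1 + (b + 1) = (a + (b + 1)) + 1 from by omega]
      exact Nat.choose_succ_succ _ _
    rw [show a + 1 - 1 = a from rfl, show a + 1 + (b + 1 - 1) = a + (b + 1) from by omega, key]
    push_cast
    ring

lemma G_mul : invOneSubYZ * (1 - MvPowerSeries.X 0 - MvPowerSeries.X 1) = 1 := by
  ext d
  rw [mul_sub, mul_sub, mul_one, map_sub, map_sub, coeff_mul_Xs, coeff_mul_Xs,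
    MvPowerSeries.coeff_one, coeff_invOneSubYZ, coeff_invOneSubYZ, coeff_invOneSubYZ]
  have e00 : (d - Finsupp.single (0 : Fin 2) 1 : Fin 2 →₀ ℕ) 0 = d 0 - 1 := by
    rw [Finsupp.tsub_apply]; simp
  have e01 : (d - Finsupp.single (0 : Fin 2) 1 : Fin 2 →₀ ℕ) 1 = d 1 := by
    rw [Finsupp.tsub_apply]; simp [Finsupp.single_apply]
  have e10 : (d - Finsupp.single (1 : Fin 2) 1 : Fin 2 →₀ ℕ) 0 = d 0 := by
    rw [Finsupp.tsub_apply]; simp [Finsupp.single_apply]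
  have e11 : (d - Finsupp.single (1 : Fin 2) 1 : Fin 2 →₀ ℕ) 1 = d 1 - 1 := by
    rw [Finsupp.tsub_apply]; simp
  rw [e00, e01, e10, e11]
  have hz : ((if d = 0 then (1 : ℚ) else 0)) = if d 0 = 0 ∧ d 1 = 0 then 1 else 0 := by
    by_cases h : d = 0
    · rw [if_pos h, if_pos (by rw [h]; simp)]
    · rw [if_neg h, if_neg (fun hc => h ((fin2_zero_iff d).2 hc))]
  rw [hz, ← pascalQ (d 0) (d 1)]

theorem main1 : Splus + Sminus = invOneSubYZ := by
  calc Splus + Sminus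
      = (invOneSubYZ * (1 - MvPowerSeries.X 0 - MvPowerSeries.X 1)) * (Splus + Sminus) := by
        rw [G_mul, one_mul]
    _ = invOneSubYZ * ((Splus + Sminus) * (1 - MvPowerSeries.X 0 - MvPowerSeries.X 1)) := by
        ring
    _ = invOneSubYZ := by rw [sum_mul, mul_one]


lemma mul_supp (w : (Fin 2 →₀ ℕ) → ℤ) (hw : ∀ a b, w (a + b) = w a + w b)
    (f g : MvPowerSeries (Fin 2) ℚ) (a b : ℤ)
    (hf : ∀ d, w d < a → MvPowerSeries.coeff d f = 0)
    (hg : ∀ d, w d < b → MvPowerSeries.coeff d g = 0) :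
    ∀ d, w d < a + b → MvPowerSeries.coeff d (f * g) = 0 := by
  intro d hd
  rw [MvPowerSeries.coeff_mul]
  apply Finset.sum_eq_zero
  intro x hx
  rw [Finset.HasAntidiagonal.mem_antidiagonal] at hx
  have hsum : w x.1 + w x.2 < a + b := by rw [← hw, hx]; exact hd
  rcases lt_or_ge (w x.1) a with h | h
  · rw [hf _ h, zero_mul]
  · rw [hg _ (by omega), mul_zero]

lemma inv_supp (w : (Fin 2 →₀ ℕ) → ℤ) (hw : ∀ a b, w (a + b) = w a + w b)
    (f : MvPowerSeries (Fin 2) ℚ)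
    (hf : ∀ d, w d < 0 → MvPowerSeries.coeff d f = 0) :
    ∀ d, w d < 0 → MvPowerSeries.coeff d f⁻¹ = 0 := by
  have h0 : w 0 = 0 := by have := hw 0 0; simp at this; omega
  suffices H : ∀ n : ℕ, ∀ d : Fin 2 →₀ ℕ, d 0 + d 1 = n → w d < 0 →
      MvPowerSeries.coeff d f⁻¹ = 0 by
    intro d hd
    exact H (d 0 + d 1) d rfl hd
  intro n
  induction n using Nat.strong_induction_on with
  | _ n ih =>
    intro d hdn hd
    have hd0 : d ≠ 0 := by rintro rfl; rw [h0] at hd; omega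
    rw [MvPowerSeries.coeff_inv, if_neg hd0]
    have hsum : (∑ x ∈ Finset.HasAntidiagonal.antidiagonal d,
        if x.2 < d then MvPowerSeries.coeff x.1 f * MvPowerSeries.coeff x.2 f⁻¹ else 0)
        = 0 := by
      apply Finset.sum_eq_zero
      intro x hx
      rw [Finset.HasAntidiagonal.mem_antidiagonal] at hx
      split_ifs with hlt
      · rcases lt_or_ge (w x.1) 0 with h | h
        · rw [hf _ h, zero_mul]
        · have hwx2 : w x.2 < 0 := by
            have := hw x.1 x.2; rw [hx] at this; omega
          have l0 : x.2 0 ≤ d 0 := by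
            have := hlt.le; exact Finsupp.le_def.mp this 0
          have l1 : x.2 1 ≤ d 1 := by
            have := hlt.le; exact Finsupp.le_def.mp this 1
          have hne : x.2 ≠ d := hlt.ne
          have hsz : x.2 0 + x.2 1 < n := by
            rcases Nat.lt_or_ge (x.2 0 + x.2 1) n with h' | h'
            · exact h'
            · exfalso
              apply hne
              rw [fin2_eq_iff]
              omega
          rw [ih _ hsz x.2 rfl hwx2, mul_zero]
      · rfl
    rw [hsum, mul_zero]


lemma hwp : ∀ a b : Fin 2 →₀ ℕ, (((a + b) 0 : ℤ) - (a + b) 1)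
    = ((a 0 : ℤ) - a 1) + ((b 0 : ℤ) - b 1) := by
  intro a b; simp [Finsupp.add_apply]; push_cast; ring

lemma hwm : ∀ a b : Fin 2 →₀ ℕ, (((a + b) 1 : ℤ) - (a + b) 0)
    = ((a 1 : ℤ) - a 0) + ((b 1 : ℤ) - b 0) := by
  intro a b; simp [Finsupp.add_apply]; push_cast; ring

lemma sP : ∀ d : Fin 2 →₀ ℕ, d 0 ≠ d 1 → MvPowerSeries.coeff d Pzy = 0 := by
  intro d h
  rw [Pzy_eq, coeff_Dg, if_neg h]

lemma s1 : ∀ d : Fin 2 →₀ ℕ, d 0 ≠ d 1 →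
    MvPowerSeries.coeff d (1 : MvPowerSeries (Fin 2) ℚ) = 0 := by
  intro d h
  rw [MvPowerSeries.coeff_one, if_neg (fun hc => h (by rw [hc]; simp))]

lemma sA : ∀ d : Fin 2 →₀ ℕ, d 0 ≠ d 1 →
    MvPowerSeries.coeff d (1 - 2 * Pzy) = 0 := by
  intro d h
  rw [map_sub, two_mul, map_add, sP d h, s1 d h]
  ring

lemma sB : ∀ d : Fin 2 →₀ ℕ, d 0 ≠ d 1 →
    MvPowerSeries.coeff d (1 - Pzy) = 0 := by
  intro d h
  rw [map_sub, sP d h, s1 d h, sub_zero]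

lemma su : ∀ d : Fin 2 →₀ ℕ, d 0 + 1 ≠ d 1 → MvPowerSeries.coeff d Pzy_div_z = 0 := by
  intro d h
  have : MvPowerSeries.coeff d Pzy_div_z
      = if d 0 + 1 = d 1 then PowerSeries.coeff (d 1) catalanShifted else 0 := rfl
  rw [this, if_neg h]

lemma sSplus : ∀ d : Fin 2 →₀ ℕ, ((d 0 : ℤ) - d 1) < 0 →
    MvPowerSeries.coeff d Splus = 0 := by
  set w : (Fin 2 →₀ ℕ) → ℤ := fun d => (d 0 : ℤ) - d 1 with hw
  have sE : ∀ d, w d < 0 → MvPowerSeries.coeff d (1 - Pzy - MvPowerSeries.X 0) = 0 := by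
    intro d h
    rw [map_sub, sB d (by simp only [hw] at h; omega), MvPowerSeries.coeff_X, zero_sub,
      if_neg, neg_zero]
    intro hc
    rw [hc] at h
    simp [hw, Finsupp.single_apply] at h
  have sAE : ∀ d, w d < 0 → MvPowerSeries.coeff d
      ((1 - 2 * Pzy) * (1 - Pzy - MvPowerSeries.X 0)) = 0 := by
    intro d h
    exact mul_supp w hwp _ _ 0 0 (fun e he => sA e (by simp only [hw] at he; omega)) sE d
      (by simp only [add_zero]; exact h)
  have sAEi := inv_supp w hwp _ sAE
  intro d h
  rw [Splus_eq]
  exact mul_supp w hwp _ _ 0 0 (fun e he => sB e (by simp only [hw] at he; omega)) sAEi d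
    (by simp only [add_zero]; exact h)

lemma sSminus : ∀ d : Fin 2 →₀ ℕ, ((d 1 : ℤ) - d 0) < 1 →
    MvPowerSeries.coeff d Sminus = 0 := by
  set w : (Fin 2 →₀ ℕ) → ℤ := fun d => (d 1 : ℤ) - d 0 with hw
  have su1 : ∀ d, w d < 1 → MvPowerSeries.coeff d Pzy_div_z = 0 := by
    intro d h
    exact su d (by simp only [hw] at h; omega)
  have sA' : ∀ d, w d < 0 → MvPowerSeries.coeff d (1 - 2 * Pzy) = 0 := by
    intro d h
    exact sA d (by simp only [hw] at h; omega)
  have sF : ∀ d, w d < 0 → MvPowerSeries.coeff d (1 - Pzy_div_z) = 0 := by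
    intro d h
    rw [map_sub, su d (by simp only [hw] at h; omega), s1 d (by simp only [hw] at h; omega),
      sub_zero]
  have sAi := inv_supp w hwm _ sA'
  have sFi := inv_supp w hwm _ sF
  have step1 : ∀ d, w d < 1 →
      MvPowerSeries.coeff d (Pzy_div_z * (1 - 2 * Pzy)⁻¹) = 0 := by
    intro d h
    exact mul_supp w hwm _ _ 1 0 su1 sAi d (by simp only [add_zero]; exact h)
  intro d h
  rw [Sminus]
  exact mul_supp w hwm _ _ 1 0 step1 sFi d (by simp only [add_zero]; exact h)

end Stmt8Aux

theorem stmt_8 :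
    Splus + Sminus = invOneSubYZ ∧
    ∀ m1 m2 : ℕ,
      MvPowerSeries.coeff (Finsupp.single 0 m1 + Finsupp.single 1 m2) Splus
        = if m2 ≤ m1 then (Nat.choose (m1 + m2) m1 : ℚ) else 0 := by
  refine ⟨Stmt8Aux.main1, ?_⟩
  intro m1 m2
  set d : Fin 2 →₀ ℕ := Finsupp.single 0 m1 + Finsupp.single 1 m2 with hd
  have hd0 : d 0 = m1 := by simp [hd, Finsupp.single_apply]
  have hd1 : d 1 = m2 := by simp [hd, Finsupp.single_apply]
  by_cases h : m2 ≤ m1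
  · rw [if_pos h]
    have hs : MvPowerSeries.coeff d Sminus = 0 :=
      Stmt8Aux.sSminus d (by rw [hd0, hd1]; omega)
    have hcoef := congrArg (MvPowerSeries.coeff d) Stmt8Aux.main1
    rw [map_add, hs, add_zero] at hcoef
    rw [hcoef, Stmt8Aux.coeff_invOneSubYZ, hd0, hd1]
  · rw [if_neg h]
    exact Stmt8Aux.sSplus d (by rw [hd0, hd1]; omega)
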